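/- Let D be a self-adjoint operator on a separable Hilbert space H with compact resolvent such that Tr(e^{−tD²}) · t^{d/2} → C as t → 0⁺ for some constants C > 0 and d > 0, and let a ∈ B(H) be such that Tr(a e^{−tD²}) · t^{d/2} → C(a) as t → 0⁺. Writing P_λ = χ_{[−λ,λ]}(D), the limit lim_{λ→∞} Tr(P_λ a P_λ)/Tr(P_λ) exists and equals C(a)/C. -/

import Mathlib

open Filter Finset MeasureTheory Set

namespace KaramataAux


/-- The sandwich auxiliary function. -/
noncomputable def saux (α γ x : ℝ) : ℝ :=
  max 0 (min (max x (Real.exp (-1)))⁻¹ (γ * (x - α)))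

lemma saux_continuous (α γ : ℝ) : Continuous (saux α γ) := by
  have h1 : Continuous fun x : ℝ => (max x (Real.exp (-1)))⁻¹ := by
    apply (continuous_id.max continuous_const).inv₀
    intro x
    exact ne_of_gt (lt_of_lt_of_le (Real.exp_pos _) (le_max_right _ _))
  exact continuous_const.max (h1.min (by continuity))

lemma saux_nonneg (α γ x : ℝ) : 0 ≤ saux α γ x := le_max_left _ _

lemma saux_le_exp_one (α γ x : ℝ) : saux α γ x ≤ Real.exp 1 := by
  have h1 : (max x (Real.exp (-1)))⁻¹ ≤ Real.exp 1 := by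
    have : Real.exp 1 = (Real.exp (-1))⁻¹ := by rw [← Real.exp_neg]; norm_num
    rw [this]
    exact inv_anti₀ (Real.exp_pos _) (le_max_right _ _)
  calc saux α γ x ≤ max 0 (max x (Real.exp (-1)))⁻¹ :=
        max_le_max le_rfl (min_le_left _ _)
    _ ≤ Real.exp 1 := max_le (Real.exp_pos 1).le h1

lemma saux_mul_le_one (α γ : ℝ) {x : ℝ} (hx : 0 < x) : x * saux α γ x ≤ 1 := by
  have h0 : (0:ℝ) ≤ (max x (Real.exp (-1)))⁻¹ := by positivity
  have h1 : saux α γ x ≤ (max x (Real.exp (-1)))⁻¹ :=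
    max_le h0 (min_le_left _ _)
  calc x * saux α γ x ≤ x * (max x (Real.exp (-1)))⁻¹ :=
        mul_le_mul_of_nonneg_left h1 hx.le
    _ ≤ x * x⁻¹ := by
        apply mul_le_mul_of_nonneg_left _ hx.le
        exact inv_anti₀ hx (le_max_left _ _)
    _ = 1 := mul_inv_cancel₀ hx.ne'

lemma saux_eq_zero {α γ x : ℝ} (hγ : 0 ≤ γ) (hx : x ≤ α) : saux α γ x = 0 := by
  apply max_eq_left
  refine le_trans (min_le_right _ _) ?_
  exact mul_nonpos_of_nonneg_of_nonpos hγ (by linarith)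

lemma saux_mul_eq_one {α γ x : ℝ} (hE : Real.exp (-1) ≤ x)
    (hγ : (max x (Real.exp (-1)))⁻¹ ≤ γ * (x - α)) : x * saux α γ x = 1 := by
  have hx : 0 < x := lt_of_lt_of_le (Real.exp_pos _) hE
  have : saux α γ x = x⁻¹ := by
    rw [saux, min_eq_left hγ, max_eq_left hE, max_eq_right (by positivity)]
  rw [this, mul_inv_cancel₀ hx.ne']




lemma summable_aux {s : ℕ → ℝ}
    (hsum : ∀ t, 0 < t → Summable fun k => Real.exp (-t * s k))
    {t : ℝ} (ht : 0 < t) {v : ℕ → ℝ} {M : ℝ} (hv : ∀ k, |v k| ≤ M) :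
    Summable fun k => v k * Real.exp (-t * s k) := by
  apply Summable.of_norm_bounded (g := fun k => M * Real.exp (-t * s k))
    ((hsum t ht).mul_left M)
  intro k
  rw [norm_mul, Real.norm_eq_abs, Real.norm_eq_abs, Real.abs_exp]
  exact mul_le_mul_of_nonneg_right (hv k) (Real.exp_nonneg _)

lemma integral_exp_neg_mul_rpow {r ρ : ℝ} (hr : 0 < r) (hρ : 0 < ρ) :
    ∫ u in Ioi (0:ℝ), Real.exp (-(r * u)) * u ^ (ρ - 1) = r ^ (-ρ) * Real.Gamma ρ := by
  have h := MeasureTheory.integral_comp_mul_left_Ioi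
    (fun x => Real.exp (-x) * x ^ (ρ - 1)) 0 hr
  rw [mul_zero, ← Real.Gamma_eq_integral hρ] at h
  have h2 : ∫ u in Ioi (0:ℝ), Real.exp (-(r * u)) * (r * u) ^ (ρ - 1)
      = ∫ u in Ioi (0:ℝ), r ^ (ρ - 1) * (Real.exp (-(r * u)) * u ^ (ρ - 1)) := by
    refine setIntegral_congr_fun measurableSet_Ioi (fun u hu => ?_)
    rw [Real.mul_rpow hr.le (le_of_lt hu)]
    ring
  rw [h2, MeasureTheory.integral_const_mul] at h
  have hrρ : (0:ℝ) < r ^ (ρ - 1) := Real.rpow_pos_of_pos hr _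
  have := h
  field_simp at this ⊢
  have hgoal : r ^ (-ρ) = (r ^ (ρ - 1))⁻¹ * r⁻¹ := by
    rw [← Real.rpow_neg_one r, ← Real.rpow_neg hr.le, ← Real.rpow_add hr]
    ring_nf
  rw [hgoal]
  have h3 : ∫ u in Ioi (0:ℝ), Real.exp (-(r * u)) * u ^ (ρ - 1)
      = (r ^ (ρ - 1))⁻¹ * (r⁻¹ * Real.Gamma ρ) := by
    rw [eq_inv_mul_iff_mul_eq₀ hrρ.ne', this, smul_eq_mul, one_div]
  rw [h3]; ring

lemma integrableOn_aux {ρ : ℝ} (hρ : 0 < ρ) {f : ℝ → ℝ} {M : ℝ}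
    (hm : AEStronglyMeasurable f (volume.restrict (Ioi 0)))
    (hb : ∀ u ∈ Ioi (0:ℝ), |f u| ≤ M * (Real.exp (-u) * u ^ (ρ - 1))) :
    IntegrableOn f (Ioi 0) := by
  apply Integrable.mono' ((Real.GammaIntegral_convergent hρ).const_mul M) hm
  rw [MeasureTheory.ae_restrict_iff' measurableSet_Ioi]
  exact MeasureTheory.ae_of_all _ (fun u hu => hb u hu)


variable {ρ A B : ℝ} {s w : ℕ → ℝ}

lemma tendsto_monomial (hρ : 0 < ρ)
    (hA : Tendsto (fun t => (∑' k, w k * Real.exp (-t * s k)) * t ^ ρ)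
      (nhdsWithin 0 (Set.Ioi 0)) (nhds A)) (n : ℕ) :
    Tendsto (fun t => (∑' k, w k * Real.exp (-(((n:ℝ)+1) * t) * s k)) * t ^ ρ)
      (nhdsWithin 0 (Set.Ioi 0)) (nhds (A / ((n:ℝ)+1) ^ ρ)) := by
  set m : ℝ := (n:ℝ)+1 with hm
  have hm0 : (0:ℝ) < m := by positivity
  have h1 : Tendsto (fun t : ℝ => m * t) (nhdsWithin 0 (Set.Ioi 0))
      (nhdsWithin 0 (Set.Ioi 0)) := by
    rw [tendsto_nhdsWithin_iff]
    constructor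
    · have h : Tendsto (fun t : ℝ => m * t) (nhds 0) (nhds 0) := by
        simpa using (continuous_mul_left m).tendsto 0
      exact h.mono_left nhdsWithin_le_nhds
    · filter_upwards [self_mem_nhdsWithin] with t ht
      exact mul_pos hm0 ht
  have h2 := (hA.comp h1).mul_const (m ^ ρ)⁻¹
  have hmρ : (0:ℝ) < m ^ ρ := Real.rpow_pos_of_pos hm0 _
  have hlim : A / m ^ ρ = A * (m ^ ρ)⁻¹ := by ring
  rw [hlim]
  apply Filter.Tendsto.congr' _ h2
  filter_upwards [self_mem_nhdsWithin] with t ht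
  have hmt : (m * t) ^ ρ = m ^ ρ * t ^ ρ := Real.mul_rpow hm0.le (le_of_lt ht)
  simp only [Function.comp]
  rw [hmt]
  field_simp

lemma tendsto_poly (hρ : 0 < ρ)
    (hsum : ∀ t, 0 < t → Summable fun k => Real.exp (-t * s k))
    (hw0 : ∀ k, 0 ≤ w k) (hwB : ∀ k, w k ≤ B)
    (hA : Tendsto (fun t => (∑' k, w k * Real.exp (-t * s k)) * t ^ ρ)
      (nhdsWithin 0 (Set.Ioi 0)) (nhds A)) (p : Polynomial ℝ) :
    Tendsto (fun t => (∑' k, w k * (Real.exp (-t * s k) *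
        Polynomial.eval (Real.exp (-t * s k)) p)) * t ^ ρ)
      (nhdsWithin 0 (Set.Ioi 0))
      (nhds (∑ n ∈ range (p.natDegree + 1), p.coeff n * (A / ((n:ℝ)+1) ^ ρ))) := by
  have hwabs : ∀ k, |w k| ≤ B := fun k => by
    rw [abs_of_nonneg (hw0 k)]; exact hwB k
  have h := tendsto_finset_sum (range (p.natDegree + 1))
    (fun n _ => ((tendsto_monomial hρ hA n).const_mul (p.coeff n)))
  apply Filter.Tendsto.congr' _ h
  filter_upwards [self_mem_nhdsWithin] with t ht
  have hterm : ∀ k, w k * (Real.exp (-t * s k) * Polynomial.eval (Real.exp (-t * s k)) p)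
      = ∑ n ∈ range (p.natDegree + 1),
          p.coeff n * (w k * Real.exp (-(((n:ℝ)+1) * t) * s k)) := by
    intro k
    rw [Polynomial.eval_eq_sum_range, Finset.mul_sum, Finset.mul_sum]
    apply Finset.sum_congr rfl
    intro n _
    have hx : Real.exp (-t * s k) * Real.exp (-t * s k) ^ n
        = Real.exp (-(((n:ℝ)+1) * t) * s k) := by
      rw [← Real.exp_nat_mul, ← Real.exp_add]
      congr 1
      push_cast
      ring
    calc w k * (Real.exp (-t*s k) * (p.coeff n * Real.exp (-t*s k) ^ n))
        = p.coeff n * (w k * (Real.exp (-t*s k) * Real.exp (-t*s k) ^ n)) := by ring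
      _ = _ := by rw [hx]
  have hsummable : ∀ n ∈ range (p.natDegree + 1),
      Summable fun k => p.coeff n * (w k * Real.exp (-(((n:ℝ)+1) * t) * s k)) := by
    intro n _
    exact (summable_aux hsum (mul_pos (by positivity : (0:ℝ) < (n:ℝ)+1) ht) hwabs).mul_left _
  rw [tsum_congr hterm, Summable.tsum_finsetSum hsummable, Finset.sum_mul]
  apply Finset.sum_congr rfl
  intro n _
  rw [tsum_mul_left, mul_assoc]


lemma integrable_mono_integrand {ρ : ℝ} (hρ : 0 < ρ) {m : ℝ} (hm : 1 ≤ m) :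
    IntegrableOn (fun u => Real.exp (-(m * u)) * u ^ (ρ - 1)) (Ioi 0) := by
  apply integrableOn_aux hρ (M := 1)
  · apply ContinuousOn.aestronglyMeasurable _ measurableSet_Ioi
    apply ContinuousOn.mul (Continuous.continuousOn (by continuity))
    apply ContinuousOn.rpow_const continuousOn_id
    intro u hu
    exact Or.inl (ne_of_gt (mem_Ioi.1 hu))
  · intro u hu
    have hu0 := mem_Ioi.1 hu
    have h2 : (0:ℝ) ≤ u ^ (ρ - 1) := Real.rpow_nonneg hu0.le _
    rw [abs_of_nonneg (mul_nonneg (Real.exp_nonneg _) h2), one_mul]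
    apply mul_le_mul_of_nonneg_right _ h2
    apply Real.exp_le_exp.2
    nlinarith

/-- `g` continuous on `[0,1]`: integrability of the associated integrand. -/
lemma integrableOn_g {ρ : ℝ} (hρ : 0 < ρ) {g : ℝ → ℝ} (hg : ContinuousOn g (Icc 0 1))
    {M : ℝ} (hM : ∀ x ∈ Icc (0:ℝ) 1, |g x| ≤ M) :
    IntegrableOn (fun u => Real.exp (-u) * g (Real.exp (-u)) * u ^ (ρ - 1)) (Ioi 0) := by
  apply integrableOn_aux hρ (M := M)
  · apply ContinuousOn.aestronglyMeasurable _ measurableSet_Ioi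
    apply ContinuousOn.mul
    apply ContinuousOn.mul (Continuous.continuousOn (by continuity))
    · apply hg.comp (Continuous.continuousOn (by continuity))
      intro u hu
      constructor
      · exact (Real.exp_pos _).le
      · exact Real.exp_le_one_iff.2 (by simp [le_of_lt (mem_Ioi.1 hu)])
    · apply ContinuousOn.rpow_const continuousOn_id
      intro u hu
      exact Or.inl (ne_of_gt (mem_Ioi.1 hu))
  · intro u hu
    have h1 : Real.exp (-u) ∈ Icc (0:ℝ) 1 :=
      ⟨(Real.exp_pos _).le, Real.exp_le_one_iff.2 (by simp [le_of_lt (mem_Ioi.1 hu)])⟩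
    have h2 : (0:ℝ) ≤ u ^ (ρ - 1) := Real.rpow_nonneg (le_of_lt (mem_Ioi.1 hu)) _
    calc |Real.exp (-u) * g (Real.exp (-u)) * u ^ (ρ - 1)|
        = Real.exp (-u) * |g (Real.exp (-u))| * u ^ (ρ - 1) := by
          rw [abs_mul, abs_mul, abs_of_nonneg (Real.exp_nonneg _), abs_of_nonneg h2]
      _ ≤ Real.exp (-u) * M * u ^ (ρ - 1) := by
          apply mul_le_mul_of_nonneg_right _ h2
          exact mul_le_mul_of_nonneg_left (hM _ h1) (Real.exp_nonneg _)
      _ = M * (Real.exp (-u) * u ^ (ρ - 1)) := by ring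

lemma integral_poly {ρ : ℝ} (hρ : 0 < ρ) (p : Polynomial ℝ) :
    ∫ u in Ioi (0:ℝ), Real.exp (-u) * Polynomial.eval (Real.exp (-u)) p * u ^ (ρ - 1)
      = ∑ n ∈ range (p.natDegree + 1), p.coeff n * (Real.Gamma ρ / ((n:ℝ)+1) ^ ρ) := by
  have h1 : ∀ u ∈ Ioi (0:ℝ), Real.exp (-u) * Polynomial.eval (Real.exp (-u)) p * u ^ (ρ-1)
      = ∑ n ∈ range (p.natDegree+1),
        p.coeff n * (Real.exp (-(((n:ℝ)+1) * u)) * u ^ (ρ-1)) := by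
    intro u _
    rw [Polynomial.eval_eq_sum_range, Finset.mul_sum, Finset.sum_mul]
    apply Finset.sum_congr rfl
    intro n _
    have hx : Real.exp (-u) * Real.exp (-u) ^ n = Real.exp (-(((n:ℝ)+1) * u)) := by
      rw [← Real.exp_nat_mul, ← Real.exp_add]
      congr 1
      ring
    calc Real.exp (-u) * (p.coeff n * Real.exp (-u) ^ n) * u ^ (ρ-1)
        = p.coeff n * ((Real.exp (-u) * Real.exp (-u) ^ n) * u ^ (ρ-1)) := by ring
      _ = _ := by rw [hx]
  rw [setIntegral_congr_fun measurableSet_Ioi h1, integral_finset_sum]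
  · apply Finset.sum_congr rfl
    intro n _
    have hn : (0:ℝ) < (n:ℝ)+1 := by positivity
    rw [integral_const_mul, integral_exp_neg_mul_rpow hn hρ,
      Real.rpow_neg hn.le, div_eq_inv_mul]
  · intro n _
    apply Integrable.const_mul
    exact integrable_mono_integrand hρ (by push_cast; linarith [Nat.cast_nonneg (α := ℝ) n])


lemma abs_sub_le₃ (a b c d : ℝ) : |a - d| ≤ |a - b| + |b - c| + |c - d| := by
  have t1 := abs_sub_le a b d
  have t2 := abs_sub_le b c d
  linarith

lemma tendsto_continuous {ρ A B : ℝ} {s w : ℕ → ℝ} (hρ : 0 < ρ)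
    (hs : ∀ k, 0 ≤ s k)
    (hsum : ∀ t, 0 < t → Summable fun k => Real.exp (-t * s k))
    (hw0 : ∀ k, 0 ≤ w k) (hwB : ∀ k, w k ≤ B)
    (hA : Tendsto (fun t => (∑' k, w k * Real.exp (-t * s k)) * t ^ ρ)
      (nhdsWithin 0 (Set.Ioi 0)) (nhds A))
    {g : ℝ → ℝ} (hg : ContinuousOn g (Icc 0 1)) :
    Tendsto (fun t => (∑' k, w k * (Real.exp (-t * s k) * g (Real.exp (-t * s k)))) * t ^ ρ)
      (nhdsWithin 0 (Set.Ioi 0))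
      (nhds ((A / Real.Gamma ρ) *
        ∫ u in Ioi (0:ℝ), Real.exp (-u) * g (Real.exp (-u)) * u ^ (ρ - 1))) := by
  have hwabs : ∀ k, |w k| ≤ B := fun k => by rw [abs_of_nonneg (hw0 k)]; exact hwB k
  have hB0 : 0 ≤ B := le_trans (hw0 0) (hwB 0)
  have hΓ : 0 < Real.Gamma ρ := Real.Gamma_pos_of_pos hρ
  have hΓ' : Real.Gamma ρ ≠ 0 := ne_of_gt hΓ
  have hA0 : 0 ≤ A := by
    refine ge_of_tendsto hA ?_
    filter_upwards [self_mem_nhdsWithin] with t ht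
    have ht0 : (0:ℝ) < t := ht
    have h0 : 0 ≤ ∑' k, w k * Real.exp (-t * s k) :=
      tsum_nonneg fun k => mul_nonneg (hw0 k) (Real.exp_nonneg _)
    exact mul_nonneg h0 (Real.rpow_nonneg ht0.le _)
  obtain ⟨M, hM⟩ := isCompact_Icc.exists_bound_of_continuousOn hg
  have hM' : ∀ x ∈ Icc (0:ℝ) 1, |g x| ≤ M := fun x hx => by
    simpa [Real.norm_eq_abs] using hM x hx
  have hM0 : 0 ≤ M := le_trans (abs_nonneg _) (hM' 0 (by norm_num))
  rw [Metric.tendsto_nhds]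
  intro ε hε
  set ε' := ε / (2*A + 3) with hε'def
  have hε' : 0 < ε' := div_pos hε (by linarith)
  have hε'ε : ε' * (2*A + 3) = ε := div_mul_cancel₀ _ (by linarith)
  obtain ⟨p, hp⟩ := exists_polynomial_near_of_continuousOn 0 1 g hg ε' hε'
  set Sp := ∑ n ∈ range (p.natDegree + 1), p.coeff n * (A / ((n:ℝ)+1) ^ ρ) with hSpdef
  have hFp := tendsto_poly hρ hsum hw0 hwB hA p
  obtain ⟨Mp, hMp⟩ := isCompact_Icc.exists_bound_of_continuousOn
    ((p.continuous_aeval).continuousOn : ContinuousOn (fun x : ℝ => Polynomial.eval x p) _)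
  have hMp' : ∀ x ∈ Icc (0:ℝ) 1, |Polynomial.eval x p| ≤ Mp := fun x hx => by
    simpa [Real.norm_eq_abs] using hMp x hx
  have hMp0 : 0 ≤ Mp := le_trans (abs_nonneg _) (hMp' 0 (by norm_num))
  have hIp : (A / Real.Gamma ρ) *
      ∫ u in Ioi (0:ℝ), Real.exp (-u) * Polynomial.eval (Real.exp (-u)) p * u ^ (ρ - 1)
      = Sp := by
    rw [integral_poly hρ p, hSpdef, Finset.mul_sum]
    apply Finset.sum_congr rfl
    intro n _
    field_simp
  have Int_g := integrableOn_g hρ hg hM'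
  have Int_p : IntegrableOn
      (fun u => Real.exp (-u) * Polynomial.eval (Real.exp (-u)) p * u ^ (ρ - 1)) (Ioi 0) :=
    integrableOn_g (g := fun x => Polynomial.eval x p) hρ
      ((p.continuous_aeval).continuousOn) hMp'
  -- |Ig - Sp| ≤ A * ε'
  have hIdiff : |(A / Real.Gamma ρ) *
      (∫ u in Ioi (0:ℝ), Real.exp (-u) * g (Real.exp (-u)) * u ^ (ρ - 1)) - Sp| ≤ A * ε' := by
    rw [← hIp, ← mul_sub, ← MeasureTheory.integral_sub Int_g Int_p]
    rw [abs_mul, abs_of_nonneg (by positivity : (0:ℝ) ≤ A / Real.Gamma ρ)]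
    have hbound : |∫ u in Ioi (0:ℝ),
        (Real.exp (-u) * g (Real.exp (-u)) * u ^ (ρ - 1)
          - Real.exp (-u) * Polynomial.eval (Real.exp (-u)) p * u ^ (ρ - 1))|
        ≤ ε' * Real.Gamma ρ := by
      have hle := MeasureTheory.norm_integral_le_of_norm_le
        (((Real.GammaIntegral_convergent hρ).const_mul ε')) ?_ (f := fun u =>
          Real.exp (-u) * g (Real.exp (-u)) * u ^ (ρ - 1)
            - Real.exp (-u) * Polynomial.eval (Real.exp (-u)) p * u ^ (ρ - 1))
      · rw [Real.norm_eq_abs] at hle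
        calc |∫ u in Ioi (0:ℝ), (Real.exp (-u) * g (Real.exp (-u)) * u ^ (ρ - 1)
            - Real.exp (-u) * Polynomial.eval (Real.exp (-u)) p * u ^ (ρ - 1))|
            ≤ ∫ u in Ioi (0:ℝ), ε' * (Real.exp (-u) * u ^ (ρ - 1)) := hle
          _ = ε' * Real.Gamma ρ := by
              rw [integral_const_mul, ← Real.Gamma_eq_integral hρ]
      · rw [ae_restrict_iff' measurableSet_Ioi]
        apply ae_of_all
        intro u hu
        have hu0 : (0:ℝ) < u := hu
        have hx : Real.exp (-u) ∈ Icc (0:ℝ) 1 :=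
          ⟨(Real.exp_pos _).le, Real.exp_le_one_iff.2 (by linarith)⟩
        have h2 : (0:ℝ) ≤ u ^ (ρ - 1) := Real.rpow_nonneg hu0.le _
        have heq : Real.exp (-u) * g (Real.exp (-u)) * u ^ (ρ - 1)
            - Real.exp (-u) * Polynomial.eval (Real.exp (-u)) p * u ^ (ρ - 1)
            = (Real.exp (-u) * u ^ (ρ - 1)) * (g (Real.exp (-u))
              - Polynomial.eval (Real.exp (-u)) p) := by ring
        beta_reduce
        rw [Real.norm_eq_abs, heq, abs_mul,
          abs_of_nonneg (mul_nonneg (Real.exp_nonneg _) h2)]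
        have hgp : |g (Real.exp (-u)) - Polynomial.eval (Real.exp (-u)) p| ≤ ε' := by
          rw [abs_sub_comm]
          exact le_of_lt (hp _ hx)
        calc (Real.exp (-u) * u ^ (ρ - 1))
              * |g (Real.exp (-u)) - Polynomial.eval (Real.exp (-u)) p|
            ≤ (Real.exp (-u) * u ^ (ρ - 1)) * ε' :=
              mul_le_mul_of_nonneg_left hgp (by positivity)
          _ = ε' * (Real.exp (-u) * u ^ (ρ - 1)) := by ring
    calc A / Real.Gamma ρ * |∫ u in Ioi (0:ℝ),
          (Real.exp (-u) * g (Real.exp (-u)) * u ^ (ρ - 1)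
            - Real.exp (-u) * Polynomial.eval (Real.exp (-u)) p * u ^ (ρ - 1))|
        ≤ A / Real.Gamma ρ * (ε' * Real.Gamma ρ) :=
          mul_le_mul_of_nonneg_left hbound (by positivity)
      _ = A * ε' := by field_simp
  have hev1 := (Metric.tendsto_nhds.1 hFp) ε' hε'
  have hev2 := (Metric.tendsto_nhds.1 hA) 1 one_pos
  filter_upwards [hev1, hev2, self_mem_nhdsWithin] with t h1 h2 ht
  have ht0 : (0:ℝ) < t := ht
  have htρ : (0:ℝ) ≤ t ^ ρ := Real.rpow_nonneg ht0.le _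
  have hXmem : ∀ k, Real.exp (-t * s k) ∈ Icc (0:ℝ) 1 := fun k =>
    ⟨(Real.exp_pos _).le, Real.exp_le_one_iff.2 (by nlinarith [hs k])⟩
  have Sg : Summable (fun k => w k * (Real.exp (-t * s k) * g (Real.exp (-t * s k)))) := by
    have hv : ∀ k, |w k * g (Real.exp (-t * s k))| ≤ B * M := fun k => by
      rw [abs_mul]
      exact mul_le_mul (hwabs k) (hM' _ (hXmem k)) (abs_nonneg _) hB0
    exact (summable_aux hsum ht0 hv).congr fun k => by ring
  have Sp2 : Summable (fun k => w k * (Real.exp (-t * s k) *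
      Polynomial.eval (Real.exp (-t * s k)) p)) := by
    have hv : ∀ k, |w k * Polynomial.eval (Real.exp (-t * s k)) p| ≤ B * Mp := fun k => by
      rw [abs_mul]
      exact mul_le_mul (hwabs k) (hMp' _ (hXmem k)) (abs_nonneg _) hB0
    exact (summable_aux hsum ht0 hv).congr fun k => by ring
  have Sexp : Summable (fun k => w k * Real.exp (-t * s k)) := summable_aux hsum ht0 hwabs
  have Sdiff : Summable (fun k => w k * (Real.exp (-t * s k) * g (Real.exp (-t * s k)))
      - w k * (Real.exp (-t * s k) * Polynomial.eval (Real.exp (-t * s k)) p)) := Sg.sub Sp2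
  rw [Real.dist_eq] at h1 h2 ⊢
  have hAbound : (∑' k, w k * Real.exp (-t * s k)) * t ^ ρ ≤ A + 1 := by
    have := (abs_sub_lt_iff.1 h2).1
    linarith
  have hdiff1 : |(∑' k, w k * (Real.exp (-t*s k) * g (Real.exp (-t*s k)))) * t ^ ρ
      - (∑' k, w k * (Real.exp (-t*s k) * Polynomial.eval (Real.exp (-t*s k)) p)) * t ^ ρ|
      ≤ ε' * (A + 1) := by
    rw [← sub_mul, abs_mul, abs_of_nonneg htρ, ← Summable.tsum_sub Sg Sp2]
    have hterm : ∀ k, |w k * (Real.exp (-t * s k) * g (Real.exp (-t * s k)))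
        - w k * (Real.exp (-t * s k) * Polynomial.eval (Real.exp (-t * s k)) p)|
        ≤ ε' * (w k * Real.exp (-t * s k)) := by
      intro k
      have heq : w k * (Real.exp (-t * s k) * g (Real.exp (-t * s k)))
          - w k * (Real.exp (-t * s k) * Polynomial.eval (Real.exp (-t * s k)) p)
          = (w k * Real.exp (-t * s k)) * (g (Real.exp (-t * s k))
            - Polynomial.eval (Real.exp (-t * s k)) p) := by ring
      have hwx : (0:ℝ) ≤ w k * Real.exp (-t * s k) :=
        mul_nonneg (hw0 k) (Real.exp_nonneg _)
      rw [heq, abs_mul, abs_of_nonneg hwx]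
      have hgp : |g (Real.exp (-t * s k)) - Polynomial.eval (Real.exp (-t * s k)) p| ≤ ε' := by
        rw [abs_sub_comm]
        exact le_of_lt (hp _ (hXmem k))
      calc (w k * Real.exp (-t * s k))
            * |g (Real.exp (-t * s k)) - Polynomial.eval (Real.exp (-t * s k)) p|
          ≤ (w k * Real.exp (-t * s k)) * ε' := mul_le_mul_of_nonneg_left hgp hwx
        _ = ε' * (w k * Real.exp (-t * s k)) := by ring
    have habstsum : |∑' k, (w k * (Real.exp (-t*s k) * g (Real.exp (-t*s k)))
        - w k * (Real.exp (-t*s k) * Polynomial.eval (Real.exp (-t*s k)) p))|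
        ≤ ∑' k, |w k * (Real.exp (-t*s k) * g (Real.exp (-t*s k)))
        - w k * (Real.exp (-t*s k) * Polynomial.eval (Real.exp (-t*s k)) p)| := by
      have := norm_tsum_le_tsum_norm (f := fun k =>
          w k * (Real.exp (-t*s k) * g (Real.exp (-t*s k)))
          - w k * (Real.exp (-t*s k) * Polynomial.eval (Real.exp (-t*s k)) p))
        (by simpa [Real.norm_eq_abs] using Sdiff.abs)
      simpa [Real.norm_eq_abs] using this
    have htsum_le : ∑' k, |w k * (Real.exp (-t*s k) * g (Real.exp (-t*s k)))
        - w k * (Real.exp (-t*s k) * Polynomial.eval (Real.exp (-t*s k)) p)|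
        ≤ ∑' k, ε' * (w k * Real.exp (-t * s k)) :=
      Summable.tsum_le_tsum hterm Sdiff.abs (Sexp.mul_left ε')
    have hval : ∑' k, ε' * (w k * Real.exp (-t * s k))
        = ε' * ∑' k, w k * Real.exp (-t * s k) := tsum_mul_left
    calc |∑' k, (w k * (Real.exp (-t*s k) * g (Real.exp (-t*s k)))
          - w k * (Real.exp (-t*s k) * Polynomial.eval (Real.exp (-t*s k)) p))| * t ^ ρ
        ≤ (ε' * ∑' k, w k * Real.exp (-t * s k)) * t ^ ρ := by
          apply mul_le_mul_of_nonneg_right _ htρ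
          rw [← hval]
          exact le_trans habstsum htsum_le
      _ = ε' * ((∑' k, w k * Real.exp (-t * s k)) * t ^ ρ) := by ring
      _ ≤ ε' * (A + 1) := mul_le_mul_of_nonneg_left hAbound hε'.le
  -- final triangle inequality
  have tri1 : |(∑' k, w k * (Real.exp (-t*s k) * g (Real.exp (-t*s k)))) * t ^ ρ
      - (A / Real.Gamma ρ) * ∫ u in Ioi (0:ℝ),
          Real.exp (-u) * g (Real.exp (-u)) * u ^ (ρ - 1)|
      ≤ |(∑' k, w k * (Real.exp (-t*s k) * g (Real.exp (-t*s k)))) * t ^ ρ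
          - (∑' k, w k * (Real.exp (-t*s k) * Polynomial.eval (Real.exp (-t*s k)) p)) * t ^ ρ|
        + |(∑' k, w k * (Real.exp (-t*s k) * Polynomial.eval (Real.exp (-t*s k)) p)) * t ^ ρ
          - Sp|
        + |Sp - (A / Real.Gamma ρ) * ∫ u in Ioi (0:ℝ),
            Real.exp (-u) * g (Real.exp (-u)) * u ^ (ρ - 1)| := abs_sub_le₃ _ _ _ _
  have hSpIg : |Sp - (A / Real.Gamma ρ) * ∫ u in Ioi (0:ℝ),
      Real.exp (-u) * g (Real.exp (-u)) * u ^ (ρ - 1)| ≤ A * ε' := by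
    rw [abs_sub_comm]; exact hIdiff
  calc |(∑' k, w k * (Real.exp (-t*s k) * g (Real.exp (-t*s k)))) * t ^ ρ
      - (A / Real.Gamma ρ) * ∫ u in Ioi (0:ℝ),
          Real.exp (-u) * g (Real.exp (-u)) * u ^ (ρ - 1)|
      ≤ ε' * (A + 1) + ε' + A * ε' := by
        have := tri1
        linarith [hdiff1, le_of_lt h1, hSpIg]
    _ < ε := by nlinarith [hε', hε'ε]

-- new material
lemma integrableOn_indicator_rpow {ρ : ℝ} (hρ : 0 < ρ) {c : ℝ} (hc : 0 < c) :
    IntegrableOn (Set.indicator (Ioc 0 c) (fun u => u ^ (ρ-1))) (Ioi 0) := by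
  have h1 : IntegrableOn (fun u : ℝ => u ^ (ρ-1)) (Ioc 0 c) := by
    rw [← intervalIntegrable_iff_integrableOn_Ioc_of_le hc.le]
    exact intervalIntegral.intervalIntegrable_rpow' (by linarith)
  exact (h1.integrable_indicator measurableSet_Ioc).integrableOn

lemma integral_indicator_rpow {ρ : ℝ} (hρ : 0 < ρ) {c : ℝ} (hc : 0 < c) :
    ∫ u in Ioi (0:ℝ), Set.indicator (Ioc 0 c) (fun u => u ^ (ρ-1)) u = c ^ ρ / ρ := by
  rw [setIntegral_indicator measurableSet_Ioc,
    Set.inter_eq_right.mpr Set.Ioc_subset_Ioi_self,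
    ← intervalIntegral.integral_of_le hc.le,
    integral_rpow (Or.inl (by linarith : (-1:ℝ) < ρ - 1))]
  rw [sub_add_cancel, Real.zero_rpow (ne_of_gt hρ), sub_zero]

lemma karamata {ρ A B : ℝ} {s w : ℕ → ℝ} (hρ : 0 < ρ) (hs : ∀ k, 0 ≤ s k)
    (hsum : ∀ t, 0 < t → Summable fun k => Real.exp (-t * s k))
    (hw0 : ∀ k, 0 ≤ w k) (hwB : ∀ k, w k ≤ B)
    (hA : Tendsto (fun t => (∑' k, w k * Real.exp (-t * s k)) * t ^ ρ)
      (nhdsWithin 0 (Set.Ioi 0)) (nhds A)) :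
    Tendsto (fun t : ℝ => (∑' k, if t * s k ≤ 1 then w k else 0) * t ^ ρ)
      (nhdsWithin 0 (Set.Ioi 0)) (nhds (A / Real.Gamma (ρ + 1))) := by
  have hwabs : ∀ k, |w k| ≤ B := fun k => by rw [abs_of_nonneg (hw0 k)]; exact hwB k
  have hB0 : 0 ≤ B := le_trans (hw0 0) (hwB 0)
  have hΓ : 0 < Real.Gamma ρ := Real.Gamma_pos_of_pos hρ
  have hΓ1 : 0 < Real.Gamma (ρ + 1) := Real.Gamma_pos_of_pos (by linarith)
  have hΓadd : Real.Gamma (ρ + 1) = ρ * Real.Gamma ρ := Real.Gamma_add_one (ne_of_gt hρ)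
  have hA0 : 0 ≤ A := by
    refine ge_of_tendsto hA ?_
    filter_upwards [self_mem_nhdsWithin] with t ht
    have ht0 : (0:ℝ) < t := ht
    have h0 : 0 ≤ ∑' k, w k * Real.exp (-t * s k) :=
      tsum_nonneg fun k => mul_nonneg (hw0 k) (Real.exp_nonneg _)
    exact mul_nonneg h0 (Real.rpow_nonneg ht0.le _)
  rw [Metric.tendsto_nhds]
  intro ε hε
  -- choose δ
  have hcont1 : Tendsto (fun δ : ℝ => A * (1+δ) ^ ρ / Real.Gamma (ρ+1)) (nhds 0)
      (nhds (A / Real.Gamma (ρ+1))) := by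
    have hc : ContinuousAt (fun δ : ℝ => A * (1+δ) ^ ρ / Real.Gamma (ρ+1)) 0 := by
      apply ContinuousAt.div_const
      apply ContinuousAt.mul continuousAt_const
      exact ((continuous_const.add continuous_id).continuousAt :
        ContinuousAt (fun δ:ℝ => 1+δ) 0).rpow_const (Or.inl (by norm_num))
    have := hc.tendsto
    simpa [Real.one_rpow] using this
  have hcont2 : Tendsto (fun δ : ℝ => A * (1-δ) ^ ρ / Real.Gamma (ρ+1)) (nhds 0)
      (nhds (A / Real.Gamma (ρ+1))) := by
    have hc : ContinuousAt (fun δ : ℝ => A * (1-δ) ^ ρ / Real.Gamma (ρ+1)) 0 := by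
      apply ContinuousAt.div_const
      apply ContinuousAt.mul continuousAt_const
      exact ((continuous_const.sub continuous_id).continuousAt :
        ContinuousAt (fun δ:ℝ => 1-δ) 0).rpow_const (Or.inl (by norm_num))
    have := hc.tendsto
    simpa [Real.one_rpow] using this
  have hev : ∀ᶠ δ in nhdsWithin (0:ℝ) (Set.Ioi 0),
      (A * (1+δ) ^ ρ / Real.Gamma (ρ+1) < A / Real.Gamma (ρ+1) + ε/2
      ∧ A / Real.Gamma (ρ+1) - ε/2 < A * (1-δ) ^ ρ / Real.Gamma (ρ+1))
      ∧ δ ∈ Set.Ioo (0:ℝ) 1 := by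
    apply Filter.Eventually.and
    · apply Filter.Eventually.and
      · apply Filter.Eventually.filter_mono nhdsWithin_le_nhds
        have := hcont1.eventually (eventually_lt_nhds (by linarith :
          A / Real.Gamma (ρ+1) < A / Real.Gamma (ρ+1) + ε/2))
        exact this
      · apply Filter.Eventually.filter_mono nhdsWithin_le_nhds
        exact hcont2.eventually (eventually_gt_nhds (by linarith))
    · have h1 : Set.Ioo (0:ℝ) 1 ∈ nhdsWithin (0:ℝ) (Set.Ioi 0) := by
        apply mem_nhdsWithin.2
        exact ⟨Set.Iio 1, isOpen_Iio, by norm_num, fun x hx => ⟨hx.2, hx.1⟩⟩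
      exact eventually_of_mem h1 (fun x hx => hx)
  obtain ⟨δ, ⟨hδ1, hδ2⟩, hδ0, hδlt⟩ := hev.exists
  -- parameters
  set E := Real.exp (-1) with hEdef
  set a := Real.exp (-(1+δ)) with hadef
  set b := Real.exp (-(1-δ)) with hbdef
  have hE0 : 0 < E := Real.exp_pos _
  have ha0 : 0 < a := Real.exp_pos _
  have hb0 : 0 < b := Real.exp_pos _
  have haE : a < E := Real.exp_lt_exp.2 (by linarith)
  have hEb : E < b := Real.exp_lt_exp.2 (by linarith)
  set γp := Real.exp 1 / (E - a) with hγpdef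
  set γm := (b * (b - E))⁻¹ with hγmdef
  have hγp0 : 0 ≤ γp := le_of_lt (div_pos (Real.exp_pos _) (by linarith))
  have hγm0 : 0 ≤ γm := le_of_lt (inv_pos.2 (mul_pos hb0 (by linarith)))
  -- continuity bounds for saux applications
  have hgbound : ∀ α γ : ℝ, ∀ x ∈ Icc (0:ℝ) 1, |saux α γ x| ≤ Real.exp 1 := by
    intro α γ x _
    rw [abs_of_nonneg (saux_nonneg α γ x)]
    exact saux_le_exp_one α γ x
  -- the two limits
  have hlimp := tendsto_continuous hρ hs hsum hw0 hwB hA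
    ((saux_continuous a γp).continuousOn (s := Icc 0 1))
  have hlimm := tendsto_continuous hρ hs hsum hw0 hwB hA
    ((saux_continuous E γm).continuousOn (s := Icc 0 1))
  -- integral bounds
  have hIp_le : (A / Real.Gamma ρ) *
      (∫ u in Ioi (0:ℝ), Real.exp (-u) * saux a γp (Real.exp (-u)) * u ^ (ρ - 1))
      ≤ A * (1+δ) ^ ρ / Real.Gamma (ρ+1) := by
    have hint : (∫ u in Ioi (0:ℝ), Real.exp (-u) * saux a γp (Real.exp (-u)) * u ^ (ρ - 1))
        ≤ ∫ u in Ioi (0:ℝ), Set.indicator (Ioc 0 (1+δ)) (fun u => u ^ (ρ-1)) u := by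
      apply setIntegral_mono_on
        (integrableOn_g hρ ((saux_continuous a γp).continuousOn) (hgbound a γp))
        (integrableOn_indicator_rpow hρ (by linarith : (0:ℝ) < 1+δ)) measurableSet_Ioi
      intro u hu
      have hu0 : (0:ℝ) < u := hu
      have hxpos : 0 < Real.exp (-u) := Real.exp_pos _
      by_cases hcase : u ≤ 1+δ
      · rw [Set.indicator_of_mem (Set.mem_Ioc.mpr ⟨hu0, hcase⟩)]
        calc Real.exp (-u) * saux a γp (Real.exp (-u)) * u ^ (ρ - 1)
            ≤ 1 * u ^ (ρ - 1) := by
              apply mul_le_mul_of_nonneg_right (saux_mul_le_one a γp hxpos)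
                (Real.rpow_nonneg hu0.le _)
          _ = u ^ (ρ - 1) := one_mul _
      · rw [Set.indicator_of_notMem (fun hmem => hcase hmem.2)]
        have hxa : Real.exp (-u) ≤ a := le_of_lt (Real.exp_lt_exp.2 (by linarith))
        rw [saux_eq_zero hγp0 hxa]
        simp
    calc (A / Real.Gamma ρ) *
        (∫ u in Ioi (0:ℝ), Real.exp (-u) * saux a γp (Real.exp (-u)) * u ^ (ρ - 1))
        ≤ (A / Real.Gamma ρ) * ((1+δ) ^ ρ / ρ) := by
          apply mul_le_mul_of_nonneg_left _ (by positivity)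
          rw [← integral_indicator_rpow hρ (by linarith : (0:ℝ) < 1+δ)]
          exact hint
      _ = A * (1+δ) ^ ρ / Real.Gamma (ρ+1) := by
          rw [hΓadd]; ring
  have hIm_ge : A * (1-δ) ^ ρ / Real.Gamma (ρ+1) ≤ (A / Real.Gamma ρ) *
      (∫ u in Ioi (0:ℝ), Real.exp (-u) * saux E γm (Real.exp (-u)) * u ^ (ρ - 1)) := by
    have hint : (∫ u in Ioi (0:ℝ), Set.indicator (Ioc 0 (1-δ)) (fun u => u ^ (ρ-1)) u)
        ≤ ∫ u in Ioi (0:ℝ), Real.exp (-u) * saux E γm (Real.exp (-u)) * u ^ (ρ - 1) := by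
      apply setIntegral_mono_on
        (integrableOn_indicator_rpow hρ (by linarith : (0:ℝ) < 1-δ))
        (integrableOn_g hρ ((saux_continuous E γm).continuousOn) (hgbound E γm))
        measurableSet_Ioi
      intro u hu
      have hu0 : (0:ℝ) < u := hu
      have hxpos : 0 < Real.exp (-u) := Real.exp_pos _
      by_cases hcase : u ≤ 1-δ
      · rw [Set.indicator_of_mem (Set.mem_Ioc.mpr ⟨hu0, hcase⟩)]
        have hxb : b ≤ Real.exp (-u) := Real.exp_le_exp.2 (by linarith)
        have hxE : E ≤ Real.exp (-u) := le_trans hEb.le hxb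
        have hone : Real.exp (-u) * saux E γm (Real.exp (-u)) = 1 := by
          apply saux_mul_eq_one hxE
          rw [max_eq_left hxE]
          have h1 : (Real.exp (-u))⁻¹ ≤ b⁻¹ := inv_anti₀ hb0 hxb
          have h2 : γm * (b - E) ≤ γm * (Real.exp (-u) - E) :=
            mul_le_mul_of_nonneg_left (by linarith) hγm0
          have h3 : γm * (b - E) = b⁻¹ := by
            rw [hγmdef]
            field_simp
            exact div_self (ne_of_gt (by linarith : (0:ℝ) < b - E))
          linarith
        rw [hone, one_mul]
      · rw [Set.indicator_of_notMem (fun hmem => hcase hmem.2)]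
        exact mul_nonneg (mul_nonneg (Real.exp_nonneg _) (saux_nonneg _ _ _))
          (Real.rpow_nonneg hu0.le _)
    calc A * (1-δ) ^ ρ / Real.Gamma (ρ+1) = (A / Real.Gamma ρ) * ((1-δ) ^ ρ / ρ) := by
          rw [hΓadd]; ring
      _ ≤ (A / Real.Gamma ρ) *
          (∫ u in Ioi (0:ℝ), Real.exp (-u) * saux E γm (Real.exp (-u)) * u ^ (ρ - 1)) := by
          apply mul_le_mul_of_nonneg_left _ (by positivity)
          rw [← integral_indicator_rpow hρ (by linarith : (0:ℝ) < 1-δ)]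
          exact hint
  -- pass to the limit
  have hevp := (Metric.tendsto_nhds.1 hlimp) (ε/2) (by linarith)
  have hevm := (Metric.tendsto_nhds.1 hlimm) (ε/2) (by linarith)
  filter_upwards [hevp, hevm, self_mem_nhdsWithin] with t h1 h2 ht
  have ht0 : (0:ℝ) < t := ht
  have htρ : (0:ℝ) ≤ t ^ ρ := Real.rpow_nonneg ht0.le _
  have hXmem : ∀ k, Real.exp (-t * s k) ∈ Icc (0:ℝ) 1 := fun k =>
    ⟨(Real.exp_nonneg _), Real.exp_le_one_iff.2
      (by nlinarith [mul_nonneg ht0.le (hs k)])⟩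
  have Sgp : Summable (fun k => w k *
      (Real.exp (-t*s k) * saux a γp (Real.exp (-t*s k)))) := by
    have hv : ∀ k, |w k * saux a γp (Real.exp (-t*s k))| ≤ B * Real.exp 1 := fun k => by
      rw [abs_mul]
      exact mul_le_mul (hwabs k) (hgbound a γp _ (hXmem k)) (abs_nonneg _) hB0
    exact (summable_aux hsum ht0 hv).congr fun k => by ring
  have Sgm : Summable (fun k => w k *
      (Real.exp (-t*s k) * saux E γm (Real.exp (-t*s k)))) := by
    have hv : ∀ k, |w k * saux E γm (Real.exp (-t*s k))| ≤ B * Real.exp 1 := fun k => by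
      rw [abs_mul]
      exact mul_le_mul (hwabs k) (hgbound E γm _ (hXmem k)) (abs_nonneg _) hB0
    exact (summable_aux hsum ht0 hv).congr fun k => by ring
  have hupper : ∀ k, (if t * s k ≤ 1 then w k else 0)
      ≤ w k * (Real.exp (-t*s k) * saux a γp (Real.exp (-t*s k))) := by
    intro k
    by_cases hcase : t * s k ≤ 1
    · rw [if_pos hcase]
      have hxE : E ≤ Real.exp (-t * s k) := by
        rw [hEdef]; exact Real.exp_le_exp.2 (by linarith)
      have hone : Real.exp (-t*s k) * saux a γp (Real.exp (-t*s k)) = 1 := by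
        apply saux_mul_eq_one hxE
        rw [max_eq_left hxE]
        have hx1 : (Real.exp (-t*s k))⁻¹ ≤ E⁻¹ := inv_anti₀ hE0 hxE
        have hx2 : γp * (E - a) ≤ γp * (Real.exp (-t*s k) - a) :=
          mul_le_mul_of_nonneg_left (by linarith) hγp0
        have hx3 : γp * (E - a) = Real.exp 1 := by
          rw [hγpdef]
          field_simp
          exact div_self (ne_of_gt (by linarith : (0:ℝ) < E - a))
        have hx4 : E⁻¹ = Real.exp 1 := by
          rw [hEdef, Real.exp_neg, inv_inv]
        linarith
      rw [hone, mul_one]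
    · rw [if_neg hcase]
      exact mul_nonneg (hw0 k) (mul_nonneg (Real.exp_nonneg _) (saux_nonneg _ _ _))
  have hlower : ∀ k, w k * (Real.exp (-t*s k) * saux E γm (Real.exp (-t*s k)))
      ≤ (if t * s k ≤ 1 then w k else 0) := by
    intro k
    by_cases hcase : t * s k ≤ 1
    · rw [if_pos hcase]
      calc w k * (Real.exp (-t*s k) * saux E γm (Real.exp (-t*s k)))
          ≤ w k * 1 :=
            mul_le_mul_of_nonneg_left (saux_mul_le_one E γm (Real.exp_pos _)) (hw0 k)
        _ = w k := mul_one _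
    · rw [if_neg hcase]
      have hxE : Real.exp (-t * s k) ≤ E := by
        rw [hEdef]
        exact le_of_lt (Real.exp_lt_exp.2 (by push_neg at hcase; linarith))
      rw [saux_eq_zero hγm0 hxE]
      simp
  have SW : Summable (fun k => if t * s k ≤ 1 then w k else 0) :=
    Summable.of_nonneg_of_le
      (fun k => by split_ifs with h; exacts [hw0 k, le_rfl]) hupper Sgp
  have hWle : (∑' k, if t * s k ≤ 1 then w k else 0) * t ^ ρ
      ≤ (∑' k, w k * (Real.exp (-t*s k) * saux a γp (Real.exp (-t*s k)))) * t ^ ρ :=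
    mul_le_mul_of_nonneg_right (Summable.tsum_le_tsum hupper SW Sgp) htρ
  have hWge : (∑' k, w k * (Real.exp (-t*s k) * saux E γm (Real.exp (-t*s k)))) * t ^ ρ
      ≤ (∑' k, if t * s k ≤ 1 then w k else 0) * t ^ ρ :=
    mul_le_mul_of_nonneg_right (Summable.tsum_le_tsum hlower Sgm SW) htρ
  rw [Real.dist_eq] at h1 h2 ⊢
  have hp1 := (abs_sub_lt_iff.1 h1).1
  have hm1 := (abs_sub_lt_iff.1 h2).2
  rw [abs_sub_lt_iff]
  constructor
  · linarith [hWle, hp1, hIp_le, hδ1]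
  · linarith [hWge, hm1, hIm_ge, hδ2]



end KaramataAux

open KaramataAux

set_option maxHeartbeats 1000000 in
/-- Proposition `HeattoInt`. The operator `D` (self-adjoint, compact resolvent)
is encoded through a nondecreasing sequence `lam k = |λ_k(D)|` of absolute values of its
eigenvalues (tending to `∞`), listed with multiplicity, together with an orthonormal eigenbasis
`(e_k)`; `c k = ⟨e_k, a e_k⟩` are the diagonal matrix coefficients of the bounded operator `a`,
so that `Tr(e^{-tD²}) = ∑ₖ e^{-t·lam k²}`, `Tr(a e^{-tD²}) = ∑ₖ c k · e^{-t·lam k²}`,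
`Tr(P_λ) = N λ` and `Tr(P_λ a P_λ) = ∑_{k < N λ} c k`, where `N λ = #{k : lam k ≤ λ}`.
If `Tr(e^{-tD²})·t^{d/2} → C > 0` and `Tr(a e^{-tD²})·t^{d/2} → Ca` as `t → 0⁺`, then
`Tr(P_λ a P_λ)/Tr(P_λ) → Ca/C` as `λ → ∞`. -/
theorem truncated_average_tendsto_of_heat_asymptotics
    (d C : ℝ) (hd : 0 < d) (hC : 0 < C) (Ca : ℂ)
    (lam : ℕ → ℝ) (hmono : Monotone lam) (hpos : ∀ k, 0 ≤ lam k)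
    (htop : Tendsto lam atTop atTop)
    (c : ℕ → ℂ) (hc : ∃ K : ℝ, ∀ k, ‖c k‖ ≤ K)
    (N : ℝ → ℕ) (hN : ∀ (x : ℝ) (k : ℕ), lam k ≤ x ↔ k < N x)
    (hheat : Tendsto (fun t : ℝ => (∑' k, Real.exp (-t * lam k ^ 2)) * Real.rpow t (d / 2))
      (nhdsWithin 0 (Set.Ioi 0)) (nhds C))
    (hheatA : Tendsto
      (fun t : ℝ => (∑' k, c k * Real.exp (-t * lam k ^ 2)) * (Real.rpow t (d / 2) : ℂ))
      (nhdsWithin 0 (Set.Ioi 0)) (nhds Ca)) :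
    Tendsto (fun x : ℝ => (∑ k ∈ range (N x), c k) / (N x : ℂ)) atTop
      (nhds (Ca / (C : ℂ))) := by
  obtain ⟨K, hK⟩ := hc
  have hK0 : 0 ≤ K := le_trans (norm_nonneg _) (hK 0)
  have hρ : 0 < d / 2 := by linarith
  have hs : ∀ k, (0:ℝ) ≤ lam k ^ 2 := fun k => sq_nonneg _
  have hΓ1 : 0 < Real.Gamma (d/2 + 1) := Real.Gamma_pos_of_pos (by linarith)
  -- summability of the heat series
  have hsum : ∀ t, 0 < t → Summable fun k => Real.exp (-t * lam k ^ 2) := by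
    by_contra hcon
    push_neg at hcon
    obtain ⟨t₀, ht₀, hns⟩ := hcon
    have hzero : ∀ t ∈ Set.Ioc (0:ℝ) t₀, ¬ Summable fun k => Real.exp (-t * lam k ^ 2) := by
      rintro t ⟨ht1, ht2⟩ hS
      apply hns
      apply Summable.of_nonneg_of_le (fun k => (Real.exp_nonneg _)) (fun k => ?_) hS
      exact Real.exp_le_exp.2 (by nlinarith [sq_nonneg (lam k)])
    have hEq : ∀ᶠ t in nhdsWithin (0:ℝ) (Set.Ioi 0),
        (∑' k, Real.exp (-t * lam k ^ 2)) * Real.rpow t (d/2) = 0 := by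
      filter_upwards [Ioc_mem_nhdsGT_of_mem (⟨le_refl 0, ht₀⟩ : (0:ℝ) ∈ Set.Ico 0 t₀)]
        with t ht
      rw [tsum_eq_zero_of_not_summable (hzero t ht), zero_mul]
    have h0 : Tendsto (fun _ : ℝ => (0:ℝ)) (nhdsWithin 0 (Set.Ioi 0)) (nhds C) :=
      Filter.Tendsto.congr' hEq hheat
    have := tendsto_nhds_unique h0 tendsto_const_nhds
    linarith
  -- complex summability
  have hsumC : ∀ t, 0 < t → Summable fun k => c k * (Real.exp (-t * lam k ^ 2) : ℂ) := by
    intro t ht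
    apply Summable.of_norm_bounded (g := fun k => K * Real.exp (-t * lam k ^2))
      ((hsum t ht).mul_left K)
    intro k
    rw [norm_mul, Complex.norm_real, Real.norm_eq_abs, Real.abs_exp]
    exact mul_le_mul_of_nonneg_right (hK k) (Real.exp_nonneg _)
  -- real and imaginary part heat limits
  have hRe : Tendsto (fun t => (∑' k, (c k).re * Real.exp (-t * lam k ^ 2)) * t ^ (d/2))
      (nhdsWithin 0 (Set.Ioi 0)) (nhds Ca.re) := by
    have h := (Complex.continuous_re.tendsto Ca).comp hheatA
    apply Filter.Tendsto.congr' _ h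
    filter_upwards [self_mem_nhdsWithin] with t ht
    simp only [Function.comp]
    rw [Complex.mul_re, Complex.ofReal_im, Complex.ofReal_re, mul_zero, sub_zero]
    congr 1
    have hmap := Complex.reCLM.map_tsum (hsumC t ht)
    simp only [Complex.reCLM_apply] at hmap
    rw [hmap]
    exact tsum_congr fun k => by
      rw [Complex.mul_re, Complex.ofReal_re, Complex.ofReal_im, mul_zero, sub_zero]
  have hIm : Tendsto (fun t => (∑' k, (c k).im * Real.exp (-t * lam k ^ 2)) * t ^ (d/2))
      (nhdsWithin 0 (Set.Ioi 0)) (nhds Ca.im) := by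
    have h := (Complex.continuous_im.tendsto Ca).comp hheatA
    apply Filter.Tendsto.congr' _ h
    filter_upwards [self_mem_nhdsWithin] with t ht
    simp only [Function.comp]
    rw [Complex.mul_im, Complex.ofReal_im, Complex.ofReal_re, mul_zero, zero_add]
    congr 1
    have hmap := Complex.imCLM.map_tsum (hsumC t ht)
    simp only [Complex.imCLM_apply] at hmap
    rw [hmap]
    exact tsum_congr fun k => by
      rw [Complex.mul_im, Complex.ofReal_im, Complex.ofReal_re, mul_zero, zero_add]
  -- the scaling map
  have hτ : Tendsto (fun x : ℝ => (x^2)⁻¹) atTop (nhdsWithin 0 (Set.Ioi 0)) :=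
    tendsto_inv_atTop_nhdsGT_zero.comp (tendsto_pow_atTop (by norm_num : (2:ℕ) ≠ 0))
  -- conversion of truncated tsums to finite sums
  have hconv : ∀ᶠ x in atTop, ∀ w : ℕ → ℝ,
      (∑' k, if (x^2)⁻¹ * lam k ^2 ≤ 1 then w k else 0) = ∑ k ∈ range (N x), w k := by
    filter_upwards [eventually_ge_atTop 1] with x hx w
    have hx0 : (0:ℝ) < x := lt_of_lt_of_le one_pos hx
    have hx2 : (0:ℝ) < x^2 := by positivity
    have hcond : ∀ k, ((x^2)⁻¹ * lam k ^2 ≤ 1 ↔ k < N x) := by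
      intro k
      rw [inv_mul_eq_div, div_le_one hx2]
      constructor
      · intro h
        exact (hN x k).1 (le_of_pow_le_pow_left₀ two_ne_zero hx0.le h)
      · intro h
        exact pow_le_pow_left₀ (hpos k) ((hN x k).2 h) 2
    rw [tsum_eq_sum (s := range (N x)) (fun k hk =>
      if_neg (fun hcc => hk (mem_range.2 ((hcond k).1 hcc))))]
    exact Finset.sum_congr rfl (fun k hk => if_pos ((hcond k).2 (mem_range.1 hk)))
  -- counting function limit
  have hA1 : Tendsto (fun t => (∑' k, (1:ℝ) * Real.exp (-t * lam k ^2)) * t ^ (d/2))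
      (nhdsWithin 0 (Set.Ioi 0)) (nhds C) := by
    have h1 : (fun t : ℝ => (∑' k, (1:ℝ) * Real.exp (-t * lam k ^2)) * t ^ (d/2))
        = fun t : ℝ => (∑' k, Real.exp (-t * lam k ^2)) * Real.rpow t (d/2) := by
      funext t
      simp [one_mul]
    rw [h1]
    exact hheat
  have L1 : Tendsto (fun x : ℝ => (N x : ℝ) * ((x^2)⁻¹) ^ (d/2)) atTop
      (nhds (C / Real.Gamma (d/2 + 1))) := by
    have hk := (karamata hρ hs hsum (w := fun _ => (1:ℝ)) (B := 1)
      (fun _ => zero_le_one) (fun _ => le_refl 1) hA1).comp hτ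
    apply Filter.Tendsto.congr' _ hk
    filter_upwards [hconv] with x hx
    simp only [Function.comp]
    rw [hx (fun _ => 1)]
    rw [Finset.sum_const, card_range, nsmul_eq_mul, mul_one]
  -- real part limit
  have hARe : Tendsto (fun t => (∑' k, ((c k).re + K) * Real.exp (-t * lam k ^2)) * t ^ (d/2))
      (nhdsWithin 0 (Set.Ioi 0)) (nhds (Ca.re + K * C)) := by
    have h := hRe.add (hheat.const_mul K)
    apply Filter.Tendsto.congr' _ h
    filter_upwards [self_mem_nhdsWithin] with t ht
    have ht0 : (0:ℝ) < t := ht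
    have hsre : Summable (fun k => (c k).re * Real.exp (-t * lam k ^2)) :=
      summable_aux hsum ht0 (fun k => le_trans (Complex.abs_re_le_norm _) (hK k))
    have hsK : Summable (fun k => K * Real.exp (-t * lam k ^2)) := (hsum t ht0).mul_left K
    have hts : (∑' k, ((c k).re + K) * Real.exp (-t * lam k ^2))
        = (∑' k, (c k).re * Real.exp (-t * lam k ^2))
          + ∑' k, K * Real.exp (-t * lam k ^2) := by
      rw [← Summable.tsum_add hsre hsK]
      exact tsum_congr fun k => by ring
    show (∑' k, (c k).re * Real.exp (-t * lam k ^2)) * t ^ (d/2)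
        + K * ((∑' k, Real.exp (-t * lam k ^2)) * t ^ (d/2))
      = (∑' k, ((c k).re + K) * Real.exp (-t * lam k ^2)) * t ^ (d/2)
    rw [hts, tsum_mul_left, add_mul]
    ring
  have hrek : ∀ k, |(c k).re| ≤ K := fun k => le_trans (Complex.abs_re_le_norm _) (hK k)
  have himk : ∀ k, |(c k).im| ≤ K := fun k => le_trans (Complex.abs_im_le_norm _) (hK k)
  -- imaginary part analogue of hARe
  have hAIm : Tendsto (fun t => (∑' k, ((c k).im + K) * Real.exp (-t * lam k ^2)) * t ^ (d/2))
      (nhdsWithin 0 (Set.Ioi 0)) (nhds (Ca.im + K * C)) := by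
    have h := hIm.add (hheat.const_mul K)
    apply Filter.Tendsto.congr' _ h
    filter_upwards [self_mem_nhdsWithin] with t ht
    have ht0 : (0:ℝ) < t := ht
    have hsim : Summable (fun k => (c k).im * Real.exp (-t * lam k ^2)) :=
      summable_aux hsum ht0 himk
    have hsK : Summable (fun k => K * Real.exp (-t * lam k ^2)) := (hsum t ht0).mul_left K
    have hts : (∑' k, ((c k).im + K) * Real.exp (-t * lam k ^2))
        = (∑' k, (c k).im * Real.exp (-t * lam k ^2))
          + ∑' k, K * Real.exp (-t * lam k ^2) := by
      rw [← Summable.tsum_add hsim hsK]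
      exact tsum_congr fun k => by ring
    show (∑' k, (c k).im * Real.exp (-t * lam k ^2)) * t ^ (d/2)
        + K * ((∑' k, Real.exp (-t * lam k ^2)) * t ^ (d/2))
      = (∑' k, ((c k).im + K) * Real.exp (-t * lam k ^2)) * t ^ (d/2)
    rw [hts, tsum_mul_left, add_mul]
    ring
  -- real part limit along N
  have LRe : Tendsto (fun x : ℝ => (∑ k ∈ range (N x), (c k).re) * ((x^2)⁻¹) ^ (d/2))
      atTop (nhds (Ca.re / Real.Gamma (d/2 + 1))) := by
    have hkar := (karamata hρ hs hsum (w := fun k => (c k).re + K) (B := K + K)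
      (fun k => by show (0:ℝ) ≤ (c k).re + K; linarith [(abs_le.1 (hrek k)).1])
      (fun k => by show (c k).re + K ≤ K + K; linarith [(abs_le.1 (hrek k)).2]) hARe).comp hτ
    have LRe' : Tendsto
        (fun x : ℝ => (∑ k ∈ range (N x), ((c k).re + K)) * ((x^2)⁻¹) ^ (d/2))
        atTop (nhds ((Ca.re + K * C) / Real.Gamma (d/2 + 1))) := by
      apply Filter.Tendsto.congr' _ hkar
      filter_upwards [hconv] with x hx
      simp only [Function.comp]
      rw [hx (fun k => (c k).re + K)]
    have hk := LRe'.sub (L1.const_mul K)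
    have hval : (Ca.re + K * C) / Real.Gamma (d/2+1) - K * (C / Real.Gamma (d/2+1))
        = Ca.re / Real.Gamma (d/2+1) := by ring
    rw [hval] at hk
    apply Filter.Tendsto.congr' _ hk
    filter_upwards [] with x
    rw [Finset.sum_add_distrib, Finset.sum_const, card_range, nsmul_eq_mul]
    ring
  have LIm : Tendsto (fun x : ℝ => (∑ k ∈ range (N x), (c k).im) * ((x^2)⁻¹) ^ (d/2))
      atTop (nhds (Ca.im / Real.Gamma (d/2 + 1))) := by
    have hkar := (karamata hρ hs hsum (w := fun k => (c k).im + K) (B := K + K)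
      (fun k => by show (0:ℝ) ≤ (c k).im + K; linarith [(abs_le.1 (himk k)).1])
      (fun k => by show (c k).im + K ≤ K + K; linarith [(abs_le.1 (himk k)).2]) hAIm).comp hτ
    have LIm' : Tendsto
        (fun x : ℝ => (∑ k ∈ range (N x), ((c k).im + K)) * ((x^2)⁻¹) ^ (d/2))
        atTop (nhds ((Ca.im + K * C) / Real.Gamma (d/2 + 1))) := by
      apply Filter.Tendsto.congr' _ hkar
      filter_upwards [hconv] with x hx
      simp only [Function.comp]
      rw [hx (fun k => (c k).im + K)]
    have hk := LIm'.sub (L1.const_mul K)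
    have hval : (Ca.im + K * C) / Real.Gamma (d/2+1) - K * (C / Real.Gamma (d/2+1))
        = Ca.im / Real.Gamma (d/2+1) := by ring
    rw [hval] at hk
    apply Filter.Tendsto.congr' _ hk
    filter_upwards [] with x
    rw [Finset.sum_add_distrib, Finset.sum_const, card_range, nsmul_eq_mul]
    ring
  -- complex numerator limit
  have LC : Tendsto (fun x : ℝ =>
      (∑ k ∈ range (N x), c k) * ((((x^2)⁻¹) ^ (d/2) : ℝ) : ℂ))
      atTop (nhds (Ca / (Real.Gamma (d/2+1) : ℂ))) := by
    have h1 := (Complex.continuous_ofReal.tendsto _).comp LRe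
    have h2 := ((Complex.continuous_ofReal.tendsto _).comp LIm).mul_const Complex.I
    have hk := h1.add h2
    have hlim : ((Ca.re / Real.Gamma (d/2+1) : ℝ) : ℂ)
        + ((Ca.im / Real.Gamma (d/2+1) : ℝ) : ℂ) * Complex.I
        = Ca / (Real.Gamma (d/2+1) : ℂ) := by
      calc ((Ca.re / Real.Gamma (d/2+1) : ℝ) : ℂ)
          + ((Ca.im / Real.Gamma (d/2+1) : ℝ) : ℂ) * Complex.I
          = (((Real.Gamma (d/2+1))⁻¹ : ℝ) : ℂ) * (↑Ca.re + ↑Ca.im * Complex.I) := by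
            push_cast
            ring
        _ = (((Real.Gamma (d/2+1))⁻¹ : ℝ) : ℂ) * Ca := by rw [Complex.re_add_im]
        _ = Ca / (Real.Gamma (d/2+1) : ℂ) := by
            push_cast
            ring
    rw [hlim] at hk
    apply Filter.Tendsto.congr' _ hk
    filter_upwards [] with x
    simp only [Function.comp]
    have hre : (∑ k ∈ range (N x), c k).re = ∑ k ∈ range (N x), (c k).re := by
      simpa using map_sum Complex.reCLM c (range (N x))
    have him : (∑ k ∈ range (N x), c k).im = ∑ k ∈ range (N x), (c k).im := by
      simpa using map_sum Complex.imCLM c (range (N x))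
    rw [← Complex.re_add_im (∑ k ∈ range (N x), c k), hre, him]
    push_cast
    ring
  -- denominator limit
  have LD : Tendsto (fun x : ℝ => (((N x : ℝ) * ((x^2)⁻¹) ^ (d/2) : ℝ) : ℂ)) atTop
      (nhds ((C / Real.Gamma (d/2+1) : ℝ) : ℂ)) :=
    (Complex.continuous_ofReal.tendsto _).comp L1
  have hdenne : ((C / Real.Gamma (d/2+1) : ℝ) : ℂ) ≠ 0 :=
    Complex.ofReal_ne_zero.mpr (ne_of_gt (div_pos hC hΓ1))
  have hdiv := LC.div LD hdenne
  have hlim2 : (Ca / (Real.Gamma (d/2+1) : ℂ)) / ((C / Real.Gamma (d/2+1) : ℝ) : ℂ)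
      = Ca / (C : ℂ) := by
    have hΓne : (Real.Gamma (d/2+1) : ℂ) ≠ 0 := Complex.ofReal_ne_zero.mpr (ne_of_gt hΓ1)
    have hCne : (C : ℂ) ≠ 0 := Complex.ofReal_ne_zero.mpr (ne_of_gt hC)
    push_cast
    field_simp
    rw [show (d + 2) / 2 = d / 2 + 1 by ring]
    exact mul_div_cancel_right₀ Ca hΓne
  rw [hlim2] at hdiv
  apply Filter.Tendsto.congr' _ hdiv
  filter_upwards [eventually_ge_atTop 1, eventually_ge_atTop (lam 0)] with x hx1 hxl
  have hx0 : (0:ℝ) < x := lt_of_lt_of_le one_pos hx1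
  have hτpos : (0:ℝ) < ((x^2)⁻¹) ^ (d/2) := Real.rpow_pos_of_pos (by positivity) _
  have hNpos : 0 < N x := (hN x 0).1 hxl
  have hNne : ((N x : ℕ) : ℂ) ≠ 0 := Nat.cast_ne_zero.mpr (Nat.pos_iff_ne_zero.1 hNpos)
  have hτC : ((((x^2)⁻¹) ^ (d/2) : ℝ) : ℂ) ≠ 0 := Complex.ofReal_ne_zero.mpr (ne_of_gt hτpos)
  simp only [Pi.div_apply]
  rw [Complex.ofReal_mul, mul_comm ((N x : ℝ) : ℂ) _,
    mul_comm (∑ k ∈ range (N x), c k) _, mul_div_mul_left _ _ hτC]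
  norm_cast
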